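/- Let G be a finite graph, k ∈ ℕ, let N ⊆ S_k be a nested proper separation system of G, and let (T,𝒱) be a tree-decomposition of G such that the map assigning to each oriented edge of T the separation it induces is a bijection onto N and such that V_t = ⋂_{(A,B)∈O(t)} B for every node t of T. Then for every k-block X of G and every node t of T: the k-profile P_k(X) inhabits t (i.e., P_k(X) ∩ N = O(t)) if and only if X ⊆ V_t. -/
import Mathlib


open SimpleGraph Set

namespace CanonicalTD

variable {V : Type*} {ι : Type*}

/-- `p = (A,B)` is a separation of `G`: `A ∪ B = V` and no edge between `A∖B` and `B∖A`. -/
def IsSep (G : SimpleGraph V) (p : Set V × Set V) : Prop :=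
  p.1 ∪ p.2 = univ ∧ ∀ a ∈ p.1 \ p.2, ∀ b ∈ p.2 \ p.1, ¬G.Adj a b

/-- The order `|A ∩ B|` of a separation `(A,B)`. -/
noncomputable def sepOrder (p : Set V × Set V) : ℕ := (p.1 ∩ p.2).ncard

/-- A separation is proper if both `A∖B` and `B∖A` are nonempty. -/
def ProperSep (p : Set V × Set V) : Prop := (p.1 \ p.2).Nonempty ∧ (p.2 \ p.1).Nonempty

/-- The partial order on separations: `(A,B) ≤ (C,D)` iff `A ⊆ C` and `D ⊆ B`. -/
def SepLE (p q : Set V × Set V) : Prop := p.1 ⊆ q.1 ∧ q.2 ⊆ p.2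

/-- Two separations are nested if they become comparable after possibly inverting. -/
def Nested (p q : Set V × Set V) : Prop :=
  SepLE p q ∨ SepLE q p ∨ SepLE p q.swap ∨ SepLE q.swap p

/-- A separation `(A,B)` is tight if every vertex of `A ∩ B` has a neighbour in `A∖B`
and a neighbour in `B∖A`. -/
def TightSep (G : SimpleGraph V) (p : Set V × Set V) : Prop :=
  ∀ v ∈ p.1 ∩ p.2, (∃ a ∈ p.1 \ p.2, G.Adj v a) ∧ ∃ b ∈ p.2 \ p.1, G.Adj v b

/-- `S_k`: the set of all proper separations of `G` of order `< k`. -/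
def Sk (G : SimpleGraph V) (k : ℕ) : Set (Set V × Set V) :=
  {p | IsSep G p ∧ ProperSep p ∧ sepOrder p < k}

/-- A separation system of `G`: a set of separations closed under inverses. -/
def IsSepSystem (G : SimpleGraph V) (N : Set (Set V × Set V)) : Prop :=
  (∀ p ∈ N, IsSep G p) ∧ ∀ p ∈ N, p.swap ∈ N

def NestedSystem (N : Set (Set V × Set V)) : Prop :=
  ∀ p ∈ N, ∀ q ∈ N, Nested p q

def ProperSystem (N : Set (Set V × Set V)) : Prop := ∀ p ∈ N, ProperSep p

/-- An orientation of `N`: contains exactly one of `(A,B)`, `(B,A)` for each `(A,B) ∈ N`. -/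
def IsOrientation (N O : Set (Set V × Set V)) : Prop :=
  O ⊆ N ∧ ∀ p ∈ N, (p ∈ O ↔ p.swap ∉ O)

/-- Consistency: no distinct `(A,B),(C,D) ∈ O` with `(D,C) ≤ (A,B)`. -/
def Consistent (O : Set (Set V × Set V)) : Prop :=
  ∀ p ∈ O, ∀ q ∈ O, p ≠ q → ¬SepLE q.swap p

/-- A `k`-profile of `G`. -/
def IsProfile (G : SimpleGraph V) (k : ℕ) (P : Set (Set V × Set V)) : Prop :=
  IsOrientation (Sk G k) P ∧ Consistent P ∧
    ∀ p ∈ P, ∀ q ∈ P, (p.2 ∩ q.2, p.1 ∪ q.1) ∉ P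

/-- `(T, Vt)` is a tree-decomposition of `G`. -/
def IsTreeDecomp (G : SimpleGraph V) (T : SimpleGraph ι) (Vt : ι → Set V) : Prop :=
  T.IsTree ∧ (⋃ t, Vt t) = univ ∧
  (∀ u v, G.Adj u v → ∃ t, u ∈ Vt t ∧ v ∈ Vt t) ∧
  ∀ (t1 t3 : ι) (w : T.Walk t1 t3), w.IsPath →
    ∀ t2 ∈ w.support, Vt t1 ∩ Vt t3 ⊆ Vt t2

/-- The vertex set of the component of `T - t1t2` containing `t1`. -/
def side (T : SimpleGraph ι) (t1 t2 : ι) : Set ι :=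
  {s | (T.deleteEdges {s(t1, t2)}).Reachable t1 s}

/-- The separation induced by the oriented edge `(t1, t2)` of `T`. -/
def inducedSep (T : SimpleGraph ι) (Vt : ι → Set V) (t1 t2 : ι) : Set V × Set V :=
  (⋃ s ∈ side T t1 t2, Vt s, ⋃ s ∈ side T t2 t1, Vt s)

/-- The set of separations induced by oriented edges of `T`. -/
def inducedSeps (T : SimpleGraph ι) (Vt : ι → Set V) : Set (Set V × Set V) :=
  {p | ∃ t1 t2, T.Adj t1 t2 ∧ p = inducedSep T Vt t1 t2}

/-- `O(t)`: separations induced by oriented edges `(t1,t2)` with `t` in the component of `t2`. -/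
def Otow (T : SimpleGraph ι) (Vt : ι → Set V) (t : ι) : Set (Set V × Set V) :=
  {p | ∃ t1 t2, T.Adj t1 t2 ∧ t ∈ side T t2 t1 ∧ p = inducedSep T Vt t1 t2}

/-- The map assigning to each oriented edge of `T` its induced separation is a bijection
onto `N`. -/
def EdgeSepBij (T : SimpleGraph ι) (Vt : ι → Set V) (N : Set (Set V × Set V)) : Prop :=
  (∀ t1 t2, T.Adj t1 t2 → inducedSep T Vt t1 t2 ∈ N) ∧
  ∀ p ∈ N, ∃! e : ι × ι, T.Adj e.1 e.2 ∧ inducedSep T Vt e.1 e.2 = p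

/-- The tree-decomposition has adhesion `< k`. -/
def AdhesionLt (T : SimpleGraph ι) (Vt : ι → Set V) (k : ℕ) : Prop :=
  ∀ t1 t2, T.Adj t1 t2 → (Vt t1 ∩ Vt t2).ncard < k

/-- The tree-decomposition is canonical: the automorphism group of `G` acts on `T`
compatibly with the parts. -/
def Canonical (G : SimpleGraph V) (T : SimpleGraph ι) (Vt : ι → Set V) : Prop :=
  ∃ ρ : (G ≃g G) → (T ≃g T),
    (∀ φ ψ : G ≃g G, ρ (φ.trans ψ) = (ρ φ).trans (ρ ψ)) ∧
    ∀ (φ : G ≃g G) (t : ι), (⇑φ) '' Vt t = Vt (ρ φ t)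

/-- `X` is `(<k)`-inseparable in `G`. -/
def Inseparable' (G : SimpleGraph V) (k : ℕ) (X : Set V) : Prop :=
  ∀ p : Set V × Set V, IsSep G p → sepOrder p < k → X ⊆ p.1 ∨ X ⊆ p.2

/-- `X` is a `k`-block of `G`: a maximal `(<k)`-inseparable set of at least `k` vertices. -/
def IsBlock (G : SimpleGraph V) (k : ℕ) (X : Set V) : Prop :=
  k ≤ X.ncard ∧ Inseparable' G k X ∧
    ∀ Y, Inseparable' G k Y → X ⊆ Y → Y = X

/-- The `k`-profile `P_k(X)` induced by a `k`-block `X`. -/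
def blockProfile (G : SimpleGraph V) (k : ℕ) (X : Set V) : Set (Set V × Set V) :=
  {p | p ∈ Sk G k ∧ X ⊆ p.2 ∧ ¬X ⊆ p.1}

/-- `p` is a `≤`-maximal element of `M`. -/
def MaxIn (M : Set (Set V × Set V)) (p : Set V × Set V) : Prop :=
  p ∈ M ∧ ∀ q ∈ M, SepLE p q → q = p

/-- The `k`-block `X` is well separated in `S`: the maximal elements of `P_k(X) ∩ S`
are pairwise nested. -/
def WellSepIn (G : SimpleGraph V) (k : ℕ) (X : Set V) (S : Set (Set V × Set V)) : Prop :=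
  ∀ p q, MaxIn (blockProfile G k X ∩ S) p → MaxIn (blockProfile G k X ∩ S) q → Nested p q

/-- `D` is the vertex set of a component of `G - X`. -/
def IsCompOf (G : SimpleGraph V) (X D : Set V) : Prop :=
  D ⊆ Xᶜ ∧ (G.induce D).Connected ∧
    ∀ D', D ⊆ D' → D' ⊆ Xᶜ → (G.induce D').Connected → D' = D

/-- `S(X)`: the set of tight separations `(A,B)` with `X ⊆ B` and `A∖B` the vertex set of
a component of `G - X`. -/
def SX (G : SimpleGraph V) (X : Set V) : Set (Set V × Set V) :=
  {p | IsSep G p ∧ TightSep G p ∧ X ⊆ p.2 ∧ IsCompOf G X (p.1 \ p.2)}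

/-- `G` is `m`-connected. -/
def IsKConnected (G : SimpleGraph V) [Fintype V] (m : ℕ) : Prop :=
  m < Fintype.card V ∧ ∀ U : Set V, U.ncard < m → (G.induce Uᶜ).Connected

/-- The tree-decomposition distinguishes the set `Profs` of profiles. -/
def DistinguishesProfiles (T : SimpleGraph ι) (Vt : ι → Set V)
    (Profs : Set (Set (Set V × Set V))) : Prop :=
  ∀ P ∈ Profs, ∀ P' ∈ Profs, P ≠ P' → ∃ p ∈ inducedSeps T Vt, p ∈ P ∧ p.swap ∈ P'

/-- The tree-decomposition distinguishes every two distinct `k`-blocks efficiently. -/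
def DistinguishesBlocksEff (G : SimpleGraph V) (k : ℕ) (T : SimpleGraph ι)
    (Vt : ι → Set V) : Prop :=
  ∀ X X', IsBlock G k X → IsBlock G k X' → X ≠ X' →
    ∃ p ∈ inducedSeps T Vt, X ⊆ p.1 ∧ X' ⊆ p.2 ∧
      ∀ q : Set V × Set V, IsSep G q → X ⊆ q.1 → X' ⊆ q.2 → sepOrder p ≤ sepOrder q

private lemma sides_step {T : SimpleGraph ι} {t1 t2 : ι}
    {s s' : ι} (hs : s ∈ side T t1 t2 ∪ side T t2 t1) (h : T.Adj s s') :
    s' ∈ side T t1 t2 ∪ side T t2 t1 := by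
  by_cases he : s(s, s') = s(t1, t2)
  · rw [Sym2.eq_iff] at he
    rcases he with ⟨rfl, rfl⟩ | ⟨rfl, rfl⟩
    · exact Or.inr (Reachable.refl _)
    · exact Or.inl (Reachable.refl _)
  · have hadj : (T.deleteEdges {s(t1, t2)}).Adj s s' := by
      rw [SimpleGraph.deleteEdges_adj]
      exact ⟨h, by simpa using he⟩
    rcases hs with hs | hs
    · exact Or.inl (hs.trans hadj.reachable)
    · refine Or.inr ?_
      have hset : ({s(t2, t1)} : Set (Sym2 ι)) = {s(t1, t2)} := by
        rw [Sym2.eq_swap]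
      have hadj' : (T.deleteEdges {s(t2, t1)}).Adj s s' := by rwa [hset]
      exact Reachable.trans hs hadj'.reachable

private lemma sides_walk {T : SimpleGraph ι} {t1 t2 : ι} :
    ∀ {a b : ι}, T.Walk a b → a ∈ side T t1 t2 ∪ side T t2 t1 →
      b ∈ side T t1 t2 ∪ side T t2 t1 := by
  intro a b w
  induction w with
  | nil => exact id
  | cons h _ ih => exact fun ha => ih (sides_step ha h)

private lemma side_total {T : SimpleGraph ι} (hconn : T.Connected) (t1 t2 t : ι) :
    t ∈ side T t1 t2 ∨ t ∈ side T t2 t1 := by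
  obtain ⟨w⟩ := hconn t1 t
  exact sides_walk w (Or.inl (Reachable.refl _))

/-- A `k`-block profile `P_k(X)` inhabits a node `t` of `T` iff `X ⊆ V_t`. -/
theorem stmt_15 {V : Type*} [Fintype V] (G : SimpleGraph V) (k : ℕ)
    {ι : Type*} [Fintype ι] (T : SimpleGraph ι) (Vt : ι → Set V)
    (N : Set (Set V × Set V)) (hNk : N ⊆ Sk G k)
    (hsys : IsSepSystem G N) (hnested : NestedSystem N) (hproper : ProperSystem N)
    (htd : IsTreeDecomp G T Vt) (hbij : EdgeSepBij T Vt N)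
    (hVt : ∀ t : ι, Vt t = ⋂ p ∈ Otow T Vt t, p.2) :
    ∀ X : Set V, IsBlock G k X → ∀ t : ι,
      (blockProfile G k X ∩ N = Otow T Vt t ↔ X ⊆ Vt t) := by
  intro X hX t
  have hconn : T.Connected := htd.1.isConnected
  have hsub : ∀ p ∈ Otow T Vt t, Vt t ⊆ p.2 := by
    intro p hp
    rw [hVt t]
    exact Set.biInter_subset_of_mem hp
  constructor
  · intro h
    rw [hVt t]
    refine Set.subset_iInter₂ fun p hp => ?_
    have hmem : p ∈ blockProfile G k X ∩ N := h ▸ hp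
    exact hmem.1.2.1
  · intro hXt
    have hOsub : Otow T Vt t ⊆ blockProfile G k X ∩ N := by
      intro p hp
      obtain ⟨t1, t2, hadj, hside, rfl⟩ := hp
      have hpN : inducedSep T Vt t1 t2 ∈ N := hbij.1 t1 t2 hadj
      have hpS : inducedSep T Vt t1 t2 ∈ Sk G k := hNk hpN
      have hX2 : X ⊆ (inducedSep T Vt t1 t2).2 :=
        hXt.trans (hsub _ ⟨t1, t2, hadj, hside, rfl⟩)
      have hX1 : ¬ X ⊆ (inducedSep T Vt t1 t2).1 := by
        intro hX1
        have hXsub : X ⊆ (inducedSep T Vt t1 t2).1 ∩ (inducedSep T Vt t1 t2).2 :=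
          Set.subset_inter hX1 hX2
        have h1 := Set.ncard_le_ncard hXsub (Set.toFinite _)
        have h2 : sepOrder (inducedSep T Vt t1 t2) < k := hpS.2.2
        have h3 : k ≤ X.ncard := hX.1
        unfold sepOrder at h2
        omega
      exact ⟨⟨hpS, hX2, hX1⟩, hpN⟩
    refine Set.Subset.antisymm ?_ hOsub
    rintro p ⟨hpB, hpN⟩
    obtain ⟨⟨t1, t2⟩, ⟨hadj, heq⟩, -⟩ := hbij.2 p hpN
    rcases side_total hconn t1 t2 t with hside | hside
    · exfalso
      have hsw : p.swap ∈ Otow T Vt t :=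
        ⟨t2, t1, hadj.symm, hside, by rw [← heq]; rfl⟩
      have : X ⊆ p.swap.2 := hXt.trans (hsub _ hsw)
      exact hpB.2.2 this
    · exact ⟨t1, t2, hadj, hside, heq.symm⟩

end CanonicalTD
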